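/- arXiv:2312.01189 — 2 statements merged into one kernel-verified Lean document; each statement's English description precedes it below -/
import Mathlib

section
/- If f ∈ ℕ[x^{±1}] is hyper-monolithic and its coefficients c_0, …, c_n satisfy gcd(c_0, …, c_n) = 1, then f is irreducible in ℕ[x^{±1}]. -/
/-- The semiring of Laurent polynomials with nonnegative integer coefficients, ℕ[x^{±1}]. -/
abbrev NL : Type := AddMonoidAlgebra ℕ ℤ

/-- The monomial `c • x^k` in ℕ[x^{±1}]. -/
noncomputable def mono (k : ℤ) (c : ℕ) : NL := AddMonoidAlgebra.single k c

/-- Evaluation at 1, i.e. the sum of the coefficients. -/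
def evalOne (f : NL) : ℕ := f.coeff.sum fun _ c => c

/-- A monomial is `c x^k` with `c ≥ 1`. -/
def IsMonomial (f : NL) : Prop := ∃ (c : ℕ) (k : ℤ), 0 < c ∧ f = mono k c

/-- A nonzero `f` is monolithic if any factorization has a monomial factor. -/
def Monolithic (f : NL) : Prop :=
  f ≠ 0 ∧ ∀ g h : NL, f = g * h → IsMonomial g ∨ IsMonomial h

/-- `f` is hyper-monolithic: it has ≥ 2 terms, written with positive coefficients and
strictly decreasing exponents `k 0 > ⋯ > k n`, and either the first gap is strictly
smaller than every later gap, or the last gap is strictly smaller than every earlier gap. -/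
def HyperMonolithic (f : NL) : Prop :=
  ∃ (n : ℕ) (k : ℕ → ℤ) (c : ℕ → ℕ),
    1 ≤ n ∧ (∀ i j, i < j → j ≤ n → k j < k i) ∧ (∀ i, i ≤ n → 0 < c i) ∧
    f = ∑ i ∈ Finset.range (n + 1), mono (k i) (c i) ∧
    ((∀ i, 1 ≤ i → i + 1 ≤ n → k 0 - k 1 < k i - k (i + 1)) ∨
     (∀ j, j + 2 ≤ n → k (n - 1) - k n < k j - k (j + 1)))

open Finset in
lemma add_mem_support_mul {g h : NL} {a b : ℤ} (ha : a ∈ g.coeff.support) (hb : b ∈ h.coeff.support) :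
    a + b ∈ (g * h).coeff.support := by
  rw [Finsupp.mem_support_iff] at ha hb ⊢
  have key : g.coeff a * h.coeff b ≤ (g * h).coeff (a + b) := by
    rw [AddMonoidAlgebra.coeff_mul]
    have h1 : g.coeff a * h.coeff b ≤ h.coeff.sum fun a₂ b₂ => if a + a₂ = a + b then g.coeff a * b₂ else 0 := by
      have := Finset.single_le_sum
        (f := fun a₂ => if a + a₂ = a + b then g.coeff a * h.coeff a₂ else 0)
        (fun i _ => Nat.zero_le _) (Finsupp.mem_support_iff.mpr hb)
      simpa using this
    calc g.coeff a * h.coeff b ≤ h.coeff.sum fun a₂ b₂ => if a + a₂ = a + b then g.coeff a * b₂ else 0 := h1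
      _ ≤ g.coeff.sum fun a₁ b₁ => h.coeff.sum fun a₂ b₂ => if a₁ + a₂ = a + b then b₁ * b₂ else 0 := by
          exact Finset.single_le_sum
            (f := fun a₁ => h.coeff.sum fun a₂ b₂ => if a₁ + a₂ = a + b then g.coeff a₁ * b₂ else 0)
            (fun i _ => Nat.zero_le _) (Finsupp.mem_support_iff.mpr ha)
  have : 0 < g.coeff a * h.coeff b := Nat.mul_pos (Nat.pos_of_ne_zero ha) (Nat.pos_of_ne_zero hb)
  omega

lemma mem_support_mul {g h : NL} {m : ℤ} (hm : m ∈ (g * h).coeff.support) :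
    ∃ a ∈ g.coeff.support, ∃ b ∈ h.coeff.support, a + b = m := by
  classical
  have := AddMonoidAlgebra.support_coeff_mul_subset g h hm
  rwa [Finset.mem_add] at this


lemma mono_apply (k : ℤ) (c : ℕ) (m : ℤ) : (mono k c).coeff m = if k = m then c else 0 :=
  Finsupp.single_apply

section
variable {n : ℕ} {k : ℕ → ℤ} {c : ℕ → ℕ}
  (hk : ∀ i j, i < j → j ≤ n → k j < k i) (hc : ∀ i, i ≤ n → 0 < c i)

include hk in
lemma k_inj : ∀ i j, i ≤ n → j ≤ n → k i = k j → i = j := by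
  intro i j hi hj hij
  rcases lt_trichotomy i j with h | h | h
  · exact absurd hij (ne_of_gt (hk i j h hj))
  · exact h
  · exact absurd hij (ne_of_lt (hk j i h hi))

include hk in
lemma coeff_eq {i : ℕ} (hi : i ≤ n) :
    (∑ j ∈ Finset.range (n + 1), mono (k j) (c j)).coeff (k i) = c i := by
  classical
  rw [AddMonoidAlgebra.coeff_sum, Finset.sum_apply']
  rw [Finset.sum_eq_single i]
  · simp [mono_apply]
  · intro j hj hji
    have hjn : j ≤ n := Nat.lt_succ_iff.mp (Finset.mem_range.mp hj)
    have : k j ≠ k i := fun h => hji (k_inj hk j i hjn hi h)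
    simp [mono_apply, this]
  · intro h
    exact absurd (Finset.mem_range.mpr (Nat.lt_succ_of_le hi)) h

include hk hc in
lemma mem_supp_iff {m : ℤ} :
    m ∈ (∑ j ∈ Finset.range (n + 1), mono (k j) (c j)).coeff.support ↔ ∃ i, i ≤ n ∧ k i = m := by
  classical
  constructor
  · intro hm
    rw [Finsupp.mem_support_iff] at hm
    by_contra hcon
    push_neg at hcon
    apply hm
    rw [AddMonoidAlgebra.coeff_sum, Finset.sum_apply']
    apply Finset.sum_eq_zero
    intro j hj
    have hjn : j ≤ n := Nat.lt_succ_iff.mp (Finset.mem_range.mp hj)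
    have : k j ≠ m := hcon j hjn
    simp [mono_apply, this]
  · rintro ⟨i, hi, rfl⟩
    rw [Finsupp.mem_support_iff, coeff_eq hk hi]
    exact (hc i hi).ne'

end

lemma exists_top2 (A : Finset ℤ) (hA : 1 < A.card) :
    ∃ a0 a1, a0 ∈ A ∧ a1 ∈ A ∧ a1 < a0 ∧ (∀ a ∈ A, a ≤ a0) ∧ ∀ a ∈ A, a ≠ a0 → a ≤ a1 := by
  have hne : A.Nonempty := Finset.card_pos.mp (by omega)
  set a0 := A.max' hne with ha0
  have hA' : (A.erase a0).Nonempty := by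
    rw [← Finset.card_pos, Finset.card_erase_of_mem (A.max'_mem hne)]; omega
  set a1 := (A.erase a0).max' hA' with ha1
  have ha1A : a1 ∈ A.erase a0 := (A.erase a0).max'_mem hA'
  refine ⟨a0, a1, A.max'_mem hne, Finset.mem_of_mem_erase ha1A, ?_, fun a ha => A.le_max' a ha,
    fun a ha hne' => (A.erase a0).le_max' a (Finset.mem_erase.mpr ⟨hne', ha⟩)⟩
  exact lt_of_le_of_ne (A.le_max' a1 (Finset.mem_of_mem_erase ha1A))
    (Finset.mem_erase.mp ha1A).1

lemma core1 {n : ℕ} {k : ℕ → ℤ} {c : ℕ → ℕ} (hn : 1 ≤ n)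
    (hk : ∀ i j, i < j → j ≤ n → k j < k i) (hc : ∀ i, i ≤ n → 0 < c i)
    (hgap : ∀ i, 1 ≤ i → i + 1 ≤ n → k 0 - k 1 < k i - k (i + 1))
    {g h : NL} (hmul : (∑ j ∈ Finset.range (n + 1), mono (k j) (c j)) = g * h)
    {a0 a1 b0 b1 : ℤ}
    (ha0 : a0 ∈ g.coeff.support) (ha1 : a1 ∈ g.coeff.support) (ha10 : a1 < a0)
    (ha0top : ∀ a ∈ g.coeff.support, a ≤ a0) (ha1top : ∀ a ∈ g.coeff.support, a ≠ a0 → a ≤ a1)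
    (hb0 : b0 ∈ h.coeff.support) (hb1 : b1 ∈ h.coeff.support) (hb10 : b1 < b0)
    (hb0top : ∀ b ∈ h.coeff.support, b ≤ b0) (hb1top : ∀ b ∈ h.coeff.support, b ≠ b0 → b ≤ b1)
    (hle : a0 - a1 ≤ b0 - b1) : False := by
  have hmemf : ∀ {m : ℤ}, m ∈ (g * h).coeff.support ↔ ∃ i, i ≤ n ∧ k i = m := by
    intro m; rw [← hmul]; exact mem_supp_iff hk hc
  have hklower : ∀ i, i ≤ n → k i ≤ k 0 := by
    intro i hi
    rcases Nat.eq_zero_or_pos i with rfl | hpos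
    · exact le_refl _
    · exact le_of_lt (hk 0 i hpos hi)
  -- k 0 = a0 + b0
  have hk0 : k 0 = a0 + b0 := by
    have h1 : a0 + b0 ∈ (g * h).coeff.support := add_mem_support_mul ha0 hb0
    obtain ⟨i, hi, hki⟩ := hmemf.mp h1
    have h2 : a0 + b0 ≤ k 0 := hki ▸ hklower i hi
    have h3 : k 0 ∈ (g * h).coeff.support := hmemf.mpr ⟨0, Nat.zero_le n, rfl⟩
    obtain ⟨a, ha, b, hb, hab⟩ := mem_support_mul h3
    have := add_le_add (ha0top a ha) (hb0top b hb)
    omega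
  -- k 1 ≤ a1 + b0
  have hk1le : k 1 ≤ a1 + b0 := by
    have h3 : k 1 ∈ (g * h).coeff.support := hmemf.mpr ⟨1, hn, rfl⟩
    obtain ⟨a, ha, b, hb, hab⟩ := mem_support_mul h3
    have hk10 : k 1 < k 0 := hk 0 1 Nat.one_pos hn
    by_cases hcase : a = a0
    · subst hcase
      have hbb0 : b ≠ b0 := by intro hbb; omega
      have := hb1top b hb hbb0
      omega
    · have := ha1top a ha hcase
      have := hb0top b hb
      omega
  have hgap0 : a0 - a1 ≤ k 0 - k 1 := by omega
  -- the two witnesses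
  obtain ⟨i, hi, hki⟩ := hmemf.mp (add_mem_support_mul ha0 hb1)
  obtain ⟨j, hj, hkj⟩ := hmemf.mp (add_mem_support_mul ha1 hb1)
  have hi1 : 1 ≤ i := by
    rcases Nat.eq_zero_or_pos i with rfl | hpos
    · omega
    · exact hpos
  have hij : i < j := by
    by_contra hcon
    push_neg at hcon
    have : k i ≤ k j := by
      rcases lt_or_eq_of_le hcon with hlt | heq
      · exact le_of_lt (hk j i hlt hi)
      · rw [heq]
    omega
  have hkj1 : k j ≤ k (i + 1) := by
    rcases lt_or_eq_of_le (Nat.succ_le_of_lt hij) with hlt | heq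
    · exact le_of_lt (hk (i + 1) j hlt hj)
    · rw [show i + 1 = j from heq]
  have := hgap i hi1 (le_trans (Nat.succ_le_of_lt hij) hj)
  omega

lemma isMonomial_of_card (g : NL) (hg0 : g ≠ 0) (hcard : ¬1 < g.coeff.support.card) :
    IsMonomial g := by
  have h1 : g.coeff.support.Nonempty := Finsupp.support_nonempty_iff.mpr (mt AddMonoidAlgebra.coeff_eq_zero.mp hg0)
  have : g.coeff.support.card = 1 := by
    have := Finset.card_pos.mpr h1; omega
  obtain ⟨a, ha⟩ := Finset.card_eq_one.mp this
  have hga : g.coeff a ≠ 0 := by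
    rw [← Finsupp.mem_support_iff, ha]; exact Finset.mem_singleton_self a
  refine ⟨g.coeff a, a, Nat.pos_of_ne_zero hga, ?_⟩
  exact AddMonoidAlgebra.coeff_injective (Finsupp.support_eq_singleton.mp ha).2

lemma monolithic1 {n : ℕ} {k : ℕ → ℤ} {c : ℕ → ℕ} (hn : 1 ≤ n)
    (hk : ∀ i j, i < j → j ≤ n → k j < k i) (hc : ∀ i, i ≤ n → 0 < c i)
    (hgap : ∀ i, 1 ≤ i → i + 1 ≤ n → k 0 - k 1 < k i - k (i + 1))
    (g h : NL) (hmul : (∑ j ∈ Finset.range (n + 1), mono (k j) (c j)) = g * h) :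
    IsMonomial g ∨ IsMonomial h := by
  have hf0 : (∑ j ∈ Finset.range (n + 1), mono (k j) (c j)) ≠ 0 := by
    intro h0
    have : (k 0) ∈ (∑ j ∈ Finset.range (n + 1), mono (k j) (c j)).coeff.support :=
      (mem_supp_iff hk hc).mpr ⟨0, Nat.zero_le n, rfl⟩
    rw [h0] at this; simp at this
  have hg0 : g ≠ 0 := by rintro rfl; rw [zero_mul] at hmul; exact hf0 hmul
  have hh0 : h ≠ 0 := by rintro rfl; rw [mul_zero] at hmul; exact hf0 hmul
  by_contra hcon
  push_neg at hcon
  obtain ⟨hmg, hmh⟩ := hcon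
  have hcg : 1 < g.coeff.support.card := by
    by_contra hc'; exact hmg (isMonomial_of_card g hg0 hc')
  have hch : 1 < h.coeff.support.card := by
    by_contra hc'; exact hmh (isMonomial_of_card h hh0 hc')
  obtain ⟨a0, a1, ha0, ha1, ha10, ha0top, ha1top⟩ := exists_top2 _ hcg
  obtain ⟨b0, b1, hb0, hb1, hb10, hb0top, hb1top⟩ := exists_top2 _ hch
  rcases le_total (a0 - a1) (b0 - b1) with hle | hle
  · exact core1 hn hk hc hgap hmul ha0 ha1 ha10 ha0top ha1top hb0 hb1 hb10 hb0top hb1top hle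
  · exact core1 hn hk hc hgap (hmul.trans (mul_comm g h))
      hb0 hb1 hb10 hb0top hb1top ha0 ha1 ha10 ha0top ha1top hle

noncomputable def negE : NL ≃ₐ[ℕ] NL := AddMonoidAlgebra.domCongr ℕ ℕ (AddEquiv.neg ℤ)

lemma negE_mono (a : ℤ) (b : ℕ) : negE (mono a b) = mono (-a) b := by
  show AddMonoidAlgebra.domCongr ℕ ℕ (AddEquiv.neg ℤ) (AddMonoidAlgebra.single a b) = _
  rw [AddMonoidAlgebra.domCongr_single]
  rfl

lemma isMonomial_of_negE {g : NL} (h : IsMonomial (negE g)) : IsMonomial g := by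
  obtain ⟨cc, t, hcc, heq⟩ := h
  refine ⟨cc, -t, hcc, negE.injective ?_⟩
  rw [heq, negE_mono, neg_neg]

lemma monolithic2 {n : ℕ} {k : ℕ → ℤ} {c : ℕ → ℕ} (hn : 1 ≤ n)
    (hk : ∀ i j, i < j → j ≤ n → k j < k i) (hc : ∀ i, i ≤ n → 0 < c i)
    (hgap : ∀ j, j + 2 ≤ n → k (n - 1) - k n < k j - k (j + 1))
    (g h : NL) (hmul : (∑ j ∈ Finset.range (n + 1), mono (k j) (c j)) = g * h) :
    IsMonomial g ∨ IsMonomial h := by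
  set k' : ℕ → ℤ := fun i => -k (n - i) with hk'def
  set c' : ℕ → ℕ := fun i => c (n - i) with hc'def
  have hk' : ∀ i j, i < j → j ≤ n → k' j < k' i := by
    intro i j hij hjn
    simp only [hk'def, neg_lt_neg_iff]
    exact hk (n - j) (n - i) (by omega) (by omega)
  have hc' : ∀ i, i ≤ n → 0 < c' i := fun i hi => hc (n - i) (by omega)
  have hgap' : ∀ i, 1 ≤ i → i + 1 ≤ n → k' 0 - k' 1 < k' i - k' (i + 1) := by
    intro i h1 h2
    have h3 := hgap (n - i - 1) (by omega)
    have h4 : n - i - 1 + 1 = n - i := by omega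
    rw [h4] at h3
    simp only [hk'def]
    have h5 : n - 0 = n := by omega
    have h6 : n - (i + 1) = n - i - 1 := by omega
    rw [h5, h6]
    linarith
  have hsum : (∑ j ∈ Finset.range (n + 1), mono (k' j) (c' j)) =
      negE (∑ j ∈ Finset.range (n + 1), mono (k j) (c j)) := by
    rw [map_sum]
    have := Finset.sum_range_reflect (fun j => mono (-(k j)) (c j)) (n + 1)
    simp only [Nat.add_sub_cancel] at this
    calc (∑ j ∈ Finset.range (n + 1), mono (k' j) (c' j))
        = ∑ j ∈ Finset.range (n + 1), mono (-(k (n - j))) (c (n - j)) := rfl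
      _ = ∑ j ∈ Finset.range (n + 1), mono (-(k j)) (c j) := this
      _ = ∑ j ∈ Finset.range (n + 1), negE (mono (k j) (c j)) := by
          simp [negE_mono]
  have hmul' : (∑ j ∈ Finset.range (n + 1), mono (k' j) (c' j)) = negE g * negE h := by
    rw [hsum, hmul, map_mul]
  rcases monolithic1 hn hk' hc' hgap' (negE g) (negE h) hmul' with h | h
  · exact Or.inl (isMonomial_of_negE h)
  · exact Or.inr (isMonomial_of_negE h)

lemma isUnit_mono_one (t : ℤ) : IsUnit (mono t 1) := by
  apply IsUnit.of_mul_eq_one (mono (-t) 1)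
  show AddMonoidAlgebra.single t 1 * AddMonoidAlgebra.single (-t) 1 = 1
  rw [AddMonoidAlgebra.single_mul_single, add_neg_cancel, mul_one, AddMonoidAlgebra.one_def]


/-- A hyper-monolithic polynomial whose coefficients have gcd 1 is irreducible. -/
theorem stmt15 (f : NL) (hf : HyperMonolithic f) (hgcd : f.coeff.support.gcd ⇑f.coeff = 1) :
    Irreducible f := by
  obtain ⟨n, k, c, hn, hk, hc, hfeq, hgap⟩ := hf
  have hmono : ∀ g h : NL, f = g * h → IsMonomial g ∨ IsMonomial h := by
    intro g h hm
    rcases hgap with hgap | hgap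
    · exact monolithic1 hn hk hc hgap g h (hfeq ▸ hm)
    · exact monolithic2 hn hk hc hgap g h (hfeq ▸ hm)
  have hk0 : k 0 ∈ f.coeff.support := by
    rw [hfeq]; exact (mem_supp_iff hk hc).mpr ⟨0, Nat.zero_le n, rfl⟩
  have hk1 : k 1 ∈ f.coeff.support := by
    rw [hfeq]; exact (mem_supp_iff hk hc).mpr ⟨1, hn, rfl⟩
  have hk10 : k 1 < k 0 := hk 0 1 Nat.one_pos hn
  constructor
  · -- not a unit
    intro hu
    obtain ⟨u, hu⟩ := hu
    have hinv : f * ↑u⁻¹ = 1 := by rw [← hu]; exact u.mul_inv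
    have hv0 : (↑u⁻¹ : NL) ≠ 0 := by
      intro h0
      rw [h0, mul_zero] at hinv
      exact one_ne_zero hinv.symm
    obtain ⟨w, hw⟩ := Finsupp.support_nonempty_iff.mpr (mt AddMonoidAlgebra.coeff_eq_zero.mp hv0)
    have h1 := add_mem_support_mul hk0 hw
    have h2 := add_mem_support_mul hk1 hw
    rw [hinv] at h1 h2
    have hsub : (1 : NL).coeff.support ⊆ {0} := by
      rw [AddMonoidAlgebra.one_def]
      exact Finsupp.support_single_subset
    have e1 : k 0 + w = 0 := Finset.mem_singleton.mp (hsub h1)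
    have e2 : k 1 + w = 0 := Finset.mem_singleton.mp (hsub h2)
    omega
  · intro a b hab
    have hdvd : ∀ cc : ℕ, (∀ m : ℤ, (cc : ℕ) ∣ f.coeff m) → cc = 1 := by
      intro cc hall
      have : cc ∣ f.coeff.support.gcd ⇑f.coeff := Finset.dvd_gcd fun m _ => hall m
      rw [hgcd] at this
      exact Nat.dvd_one.mp this
    rcases hmono a b hab with ⟨cc, t, hcc, rfl⟩ | ⟨cc, t, hcc, rfl⟩
    · left
      have h1 : cc = 1 := by
        apply hdvd
        intro m
        rw [hab]
        show cc ∣ (AddMonoidAlgebra.single t cc * b).coeff m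
        rw [AddMonoidAlgebra.coeff_single_mul_apply]
        exact Dvd.intro _ rfl
      rw [h1] at *
      exact isUnit_mono_one t
    · right
      have h1 : cc = 1 := by
        apply hdvd
        intro m
        rw [hab]
        show cc ∣ (a * AddMonoidAlgebra.single t cc).coeff m
        rw [AddMonoidAlgebra.coeff_mul_single_apply]
        exact Dvd.intro_left _ rfl
      rw [h1] at *
      exact isUnit_mono_one t
end

section
/- Let f ∈ ℕ[x^{±1}] with |supp(f)| ≥ 3 and f(1) ∈ {11, 17, 23, 27}. Then f can be written as the sum of two irreducible elements of ℕ[x^{±1}]. -/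
open AddMonoidAlgebra

noncomputable def ev : NL →+ ℕ :=
  AddMonoidAlgebra.liftNC (AddMonoidHom.id ℕ) (1 : Multiplicative ℤ →* ℕ)

lemma ev_eq (f : NL) : ev f = evalOne f := by
  show Finsupp.liftAddHom _ f.coeff = _
  rw [Finsupp.liftAddHom_apply]
  simp [evalOne]

lemma evalOne_mul (u v : NL) : evalOne (u * v) = evalOne u * evalOne v := by
  rw [← ev_eq, ← ev_eq, ← ev_eq]
  exact AddMonoidAlgebra.liftNC_mul (RingHom.id ℕ) (1 : Multiplicative ℤ →* ℕ) u v
    (fun {x y} _ => Commute.all _ _)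

lemma evalOne_add (u v : NL) : evalOne (u + v) = evalOne u + evalOne v := by
  rw [← ev_eq, ← ev_eq, ← ev_eq]; exact map_add _ _ _

lemma evalOne_single (k : ℤ) (c : ℕ) : evalOne (single k c) = c := by
  rw [← ev_eq]
  rw [show ev (single k c) = (AddMonoidHom.id ℕ) c *
    (1 : Multiplicative ℤ →* ℕ) (Multiplicative.ofAdd k) from AddMonoidAlgebra.liftNC_single _ _ _ _]
  simp

lemma evalOne_one : evalOne (1 : NL) = 1 := by
  rw [show (1 : NL) = single 0 1 from rfl, evalOne_single]

lemma evalOne_eq_zero {u : NL} (h : evalOne u = 0) : u = 0 := by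
  by_contra hu
  obtain ⟨a, ha⟩ := Finsupp.support_nonempty_iff.mpr (fun h0 => hu (coeff_injective h0))
  have h1 : u.coeff a ≠ 0 := Finsupp.mem_support_iff.mp ha
  have : u.coeff a ≤ evalOne u := Finset.single_le_sum (fun i _ => Nat.zero_le _) ha
  omega

lemma eq_single_of_evalOne_one {u : NL} (h : evalOne u = 1) :
    ∃ k, u = single k 1 := by
  have hu : u ≠ 0 := by intro h0; rw [h0] at h; simp [evalOne] at h
  obtain ⟨a, ha⟩ := Finsupp.support_nonempty_iff.mpr (fun h0 => hu (coeff_injective h0))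
  have hsplit : single a (u.coeff a) + u.erase a = u :=
    single_add_erase a u
  have he : u.coeff a + evalOne (u.erase a) = 1 := by
    rw [← evalOne_single a (u.coeff a), ← evalOne_add, hsplit, h]
  have h1 : u.coeff a ≠ 0 := Finsupp.mem_support_iff.mp ha
  have h2 : u.coeff a = 1 := by omega
  have h3 : u.erase a = 0 := evalOne_eq_zero (by omega)
  exact ⟨a, by rw [← hsplit, h2, h3, add_zero]⟩

lemma isUnit_iff_evalOne {u : NL} : IsUnit u ↔ evalOne u = 1 := by
  constructor
  · rintro ⟨⟨w, v, hwv, _⟩, rfl⟩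
    have := evalOne_mul w v
    rw [hwv, evalOne_one] at this
    exact Nat.eq_one_of_mul_eq_one_right this.symm
  · intro h
    obtain ⟨k, rfl⟩ := eq_single_of_evalOne_one h
    refine ⟨⟨single k 1, single (-k) 1, ?_, ?_⟩, rfl⟩
    · rw [AddMonoidAlgebra.single_mul_single, AddMonoidAlgebra.one_def]
      norm_num
    · rw [AddMonoidAlgebra.single_mul_single, AddMonoidAlgebra.one_def]
      norm_num

lemma irreducible_of_prime {u : NL} (h : (evalOne u).Prime) : Irreducible u := by
  constructor
  · rw [isUnit_iff_evalOne]; exact fun h1 => h.ne_one h1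
  · intro a b hab
    have hm := evalOne_mul a b
    rw [← hab] at hm
    rcases (Nat.Prime.eq_one_or_self_of_dvd h (evalOne a) ⟨evalOne b, hm⟩) with h1 | h1
    · left; exact isUnit_iff_evalOne.mpr h1
    · right
      rw [isUnit_iff_evalOne]
      have hp := h.pos
      rw [h1] at hm
      nlinarith [hm]

lemma evalOne_two {u : NL} (h : evalOne u = 2) :
    (∃ k, u = single k 2) ∨
    (∃ a b : ℤ, b < a ∧ u = single a 1 + single b 1) := by
  have hu : u ≠ 0 := by intro h0; rw [h0] at h; simp [evalOne] at h
  obtain ⟨a, ha⟩ := Finsupp.support_nonempty_iff.mpr (fun h0 => hu (coeff_injective h0))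
  have hsplit : single a (u.coeff a) + u.erase a = u :=
    single_add_erase a u
  have he : u.coeff a + evalOne (u.erase a) = 2 := by
    rw [← evalOne_single a (u.coeff a), ← evalOne_add, hsplit, h]
  have h1 : u.coeff a ≠ 0 := Finsupp.mem_support_iff.mp ha
  rcases Nat.lt_or_ge (u.coeff a) 2 with h2 | h2
  · have hua : u.coeff a = 1 := by omega
    have h3 : evalOne (u.erase a) = 1 := by omega
    obtain ⟨b, hb⟩ := eq_single_of_evalOne_one h3
    have hba : b ≠ a := by
      intro hba
      have h0 : (u.erase a).coeff a = 0 := Finsupp.erase_same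
      rw [hb, hba] at h0
      simp [AddMonoidAlgebra.coeff_single] at h0
    right
    rcases lt_or_gt_of_ne hba with hlt | hgt
    · exact ⟨a, b, hlt, by rw [← hsplit, hua, hb]⟩
    · exact ⟨b, a, hgt, by rw [← hsplit, hua, hb, add_comm]⟩
  · have hua : u.coeff a = 2 := by omega
    have h3 : u.erase a = 0 := evalOne_eq_zero (by omega)
    exact Or.inl ⟨a, by rw [← hsplit, hua, h3, add_zero]⟩

lemma NL_add_apply (u v : NL) (s : ℤ) : (u + v).coeff s = u.coeff s + v.coeff s := rfl
lemma NL_zip_apply (u v : NL) (s : ℤ) :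
    (ofCoeff (Finsupp.zipWith (fun a b => a - b) rfl u.coeff v.coeff) : NL).coeff s = u.coeff s - v.coeff s := rfl
lemma NL_ext {u w : NL} (h : ∀ s, u.coeff s = w.coeff s) : u = w := coeff_injective (Finsupp.ext h)

lemma binom_apply (p q : ℤ) (c d : ℕ) (s : ℤ) :
    (single p c + single q d : NL).coeff s
      = (if p = s then c else 0) + (if q = s then d else 0) := by
  rw [NL_add_apply]
  simp only [AddMonoidAlgebra.coeff_single, Finsupp.single_apply]

lemma quad_apply (p q r t : ℤ) (c d e w : ℕ) (s : ℤ) :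
    (single p c + single q d + single r e + single t w : NL).coeff s
      = (if p = s then c else 0) + (if q = s then d else 0)
        + (if r = s then e else 0) + (if t = s then w else 0) := by
  rw [NL_add_apply, NL_add_apply, NL_add_apply]
  simp only [AddMonoidAlgebra.coeff_single, Finsupp.single_apply]

lemma binom_mul_binom (a0 a1 b0 b1 : ℤ) :
    (single a0 1 + single a1 1 : NL) * (single b0 1 + single b1 1)
      = single (a0+b0) 1 + single (a0+b1) 1 + single (a1+b0) 1 + single (a1+b1) 1 := by
  rw [add_mul, mul_add, mul_add]
  simp only [AddMonoidAlgebra.single_mul_single, mul_one]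
  ring

lemma factor_cases {g u v : NL} (hg4 : evalOne g = 4) (huv : g = u * v) :
    evalOne u = 1 ∨ evalOne v = 1 ∨ (evalOne u = 2 ∧ evalOne v = 2) := by
  have hmul : evalOne u * evalOne v = 4 := by rw [← evalOne_mul, ← huv, hg4]
  have hle : evalOne u ≤ 4 := Nat.le_of_dvd (by norm_num) ⟨_, hmul.symm⟩
  have h5 : evalOne u = 0 ∨ evalOne u = 1 ∨ evalOne u = 2 ∨ evalOne u = 3 ∨ evalOne u = 4 := by
    omega
  rcases h5 with h|h|h|h|h <;> rw [h] at hmul <;> omega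

lemma irred_binom31 {p q : ℤ} (hpq : p ≠ q) :
    Irreducible (single p 3 + single q 1 : NL) := by
  have hg4 : evalOne (single p 3 + single q 1 : NL) = 4 := by
    rw [evalOne_add, evalOne_single, evalOne_single]
  constructor
  · rw [isUnit_iff_evalOne, hg4]; omega
  · intro u v huv
    rcases factor_cases hg4 huv with h | h | ⟨h2u, h2v⟩
    · exact Or.inl (isUnit_iff_evalOne.mpr h)
    · exact Or.inr (isUnit_iff_evalOne.mpr h)
    exfalso
    have hgp : (single p 3 + single q 1 : NL).coeff p = 3 := by
      rw [binom_apply]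
      simp [Ne.symm hpq]
    rcases evalOne_two h2u with ⟨k, rfl⟩ | ⟨a0, a1, ha, rfl⟩
    · have k1 : (single p 3 + single q 1 : NL).coeff p = ((single k 2 * v : NL)).coeff p := by rw [huv]
      rw [hgp, AddMonoidAlgebra.coeff_single_mul_apply] at k1
      omega
    rcases evalOne_two h2v with ⟨k, rfl⟩ | ⟨b0, b1, hb, rfl⟩
    · have k1 : (single p 3 + single q 1 : NL).coeff p
          = (((single a0 1 + single a1 1) * single k 2 : NL)).coeff p := by rw [huv]
      rw [hgp, AddMonoidAlgebra.coeff_mul_single_apply] at k1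
      omega
    · rw [binom_mul_binom] at huv
      have key : ∀ s : ℤ, (if p = s then (3:ℕ) else 0) + (if q = s then 1 else 0)
          = (if a0+b0 = s then (1:ℕ) else 0) + (if a0+b1 = s then 1 else 0)
            + (if a1+b0 = s then 1 else 0) + (if a1+b1 = s then 1 else 0) := by
        intro s
        have h1 : (single p 3 + single q 1 : NL).coeff s
            = (single (a0+b0) 1 + single (a0+b1) 1 + single (a1+b0) 1 + single (a1+b1) 1 : NL).coeff s := by
          rw [huv]
        rwa [binom_apply, quad_apply] at h1
      have k1 := key (a0+b0)
      have k2 := key (a1+b1)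
      have e1 : q = a0+b0 := by split_ifs at k1 <;> omega
      have e2 : q = a1+b1 := by split_ifs at k2 <;> omega
      omega

lemma irred_quad {p1 p2 p3 p4 : ℤ} (h12 : p2 < p1) (h23 : p3 < p2) (h34 : p4 < p3)
    (hne : p1 + p4 ≠ p2 + p3) :
    Irreducible (single p1 1 + single p2 1 + single p3 1 + single p4 1 : NL) := by
  have hg4 : evalOne (single p1 1 + single p2 1 + single p3 1 + single p4 1 : NL) = 4 := by
    rw [evalOne_add, evalOne_add, evalOne_add, evalOne_single, evalOne_single,
      evalOne_single, evalOne_single]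
  constructor
  · rw [isUnit_iff_evalOne, hg4]; omega
  · intro u v huv
    rcases factor_cases hg4 huv with h | h | ⟨h2u, h2v⟩
    · exact Or.inl (isUnit_iff_evalOne.mpr h)
    · exact Or.inr (isUnit_iff_evalOne.mpr h)
    exfalso
    have hgp : (single p1 1 + single p2 1 + single p3 1 + single p4 1 : NL).coeff p1 = 1 := by
      rw [quad_apply]
      split_ifs <;> omega
    rcases evalOne_two h2u with ⟨k, rfl⟩ | ⟨a0, a1, ha, rfl⟩
    · have k1 : (single p1 1 + single p2 1 + single p3 1 + single p4 1 : NL).coeff p1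
          = ((single k 2 * v : NL)).coeff p1 := by rw [huv]
      rw [hgp, AddMonoidAlgebra.coeff_single_mul_apply] at k1
      omega
    rcases evalOne_two h2v with ⟨k, rfl⟩ | ⟨b0, b1, hb, rfl⟩
    · have k1 : (single p1 1 + single p2 1 + single p3 1 + single p4 1 : NL).coeff p1
          = (((single a0 1 + single a1 1) * single k 2 : NL)).coeff p1 := by rw [huv]
      rw [hgp, AddMonoidAlgebra.coeff_mul_single_apply] at k1
      omega
    · rw [binom_mul_binom] at huv
      have key : ∀ s : ℤ, (if p1 = s then (1:ℕ) else 0) + (if p2 = s then 1 else 0)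
            + (if p3 = s then 1 else 0) + (if p4 = s then 1 else 0)
          = (if a0+b0 = s then (1:ℕ) else 0) + (if a0+b1 = s then 1 else 0)
            + (if a1+b0 = s then 1 else 0) + (if a1+b1 = s then 1 else 0) := by
        intro s
        have h1 : (single p1 1 + single p2 1 + single p3 1 + single p4 1 : NL).coeff s
            = (single (a0+b0) 1 + single (a0+b1) 1 + single (a1+b0) 1 + single (a1+b1) 1 : NL).coeff s := by
          rw [huv]
        rwa [quad_apply, quad_apply] at h1
      have hA : p1 = a0+b0 ∨ p2 = a0+b0 ∨ p3 = a0+b0 ∨ p4 = a0+b0 := by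
        by_contra hc
        push_neg at hc
        obtain ⟨c1, c2, c3, c4⟩ := hc
        have := key (a0+b0)
        rw [if_neg c1, if_neg c2, if_neg c3, if_neg c4, if_pos rfl] at this
        split_ifs at this <;> omega
      have hB : p1 = a1+b1 ∨ p2 = a1+b1 ∨ p3 = a1+b1 ∨ p4 = a1+b1 := by
        by_contra hc
        push_neg at hc
        obtain ⟨c1, c2, c3, c4⟩ := hc
        have := key (a1+b1)
        rw [if_neg c1, if_neg c2, if_neg c3, if_neg c4, if_pos rfl] at this
        split_ifs at this <;> omega
      have hp1 : a0+b0 = p1 ∨ a0+b1 = p1 ∨ a1+b0 = p1 ∨ a1+b1 = p1 := by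
        by_contra hc
        push_neg at hc
        obtain ⟨c1, c2, c3, c4⟩ := hc
        have := key p1
        rw [if_neg c1, if_neg c2, if_neg c3, if_neg c4, if_pos rfl] at this
        split_ifs at this <;> omega
      have hp2 : a0+b0 = p2 ∨ a0+b1 = p2 ∨ a1+b0 = p2 ∨ a1+b1 = p2 := by
        by_contra hc
        push_neg at hc
        obtain ⟨c1, c2, c3, c4⟩ := hc
        have := key p2
        rw [if_neg c1, if_neg c2, if_neg c3, if_neg c4] at this
        split_ifs at this <;> omega
      have hp3 : a0+b0 = p3 ∨ a0+b1 = p3 ∨ a1+b0 = p3 ∨ a1+b1 = p3 := by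
        by_contra hc
        push_neg at hc
        obtain ⟨c1, c2, c3, c4⟩ := hc
        have := key p3
        rw [if_neg c1, if_neg c2, if_neg c3, if_neg c4] at this
        split_ifs at this <;> omega
      have hp4 : a0+b0 = p4 ∨ a0+b1 = p4 ∨ a1+b0 = p4 ∨ a1+b1 = p4 := by
        by_contra hc
        push_neg at hc
        obtain ⟨c1, c2, c3, c4⟩ := hc
        have := key p4
        rw [if_neg c1, if_neg c2, if_neg c3, if_neg c4] at this
        split_ifs at this <;> omega
      omega

lemma exists_add_of_le {f g : NL} (h : ∀ s, g.coeff s ≤ f.coeff s) : ∃ h' : NL, f = g + h' := by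
  refine ⟨ofCoeff (Finsupp.zipWith (fun a b => a - b) rfl f.coeff g.coeff), NL_ext fun s => ?_⟩
  rw [NL_add_apply, NL_zip_apply]
  have := h s
  omega


/-- If `|supp f| ≥ 3` and `f(1) ∈ {11, 17, 23, 27}`, then `f` is a sum of two irreducibles. -/
theorem stmt17 (f : NL) (hsupp : 3 ≤ f.coeff.support.card)
    (hval : evalOne f ∈ ({11, 17, 23, 27} : Finset ℕ)) :
    ∃ g h : NL, Irreducible g ∧ Irreducible h ∧ f = g + h := by
  simp only [Finset.mem_insert, Finset.mem_singleton] at hval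
  have hN4 : (evalOne f - 4).Prime ∧ 11 ≤ evalOne f := by
    rcases hval with h|h|h|h <;> rw [h] <;> norm_num
  by_cases hbig : ∃ p ∈ f.coeff.support, 3 ≤ f.coeff p
  · obtain ⟨p, hp, hp3⟩ := hbig
    have hne : (f.coeff.support.erase p).Nonempty := by
      rw [← Finset.card_pos, Finset.card_erase_of_mem hp]
      omega
    obtain ⟨q, hq⟩ := hne
    have hqp : q ≠ p := Finset.ne_of_mem_erase hq
    have hq1 : f.coeff q ≠ 0 := Finsupp.mem_support_iff.mp (Finset.mem_of_mem_erase hq)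
    have hle : ∀ s, (single p 3 + single q 1 : NL).coeff s ≤ f.coeff s := by
      intro s
      rw [binom_apply]
      by_cases h1 : p = s
      · subst h1
        rw [if_pos rfl, if_neg hqp]
        omega
      · rw [if_neg h1]
        by_cases h2 : q = s
        · subst h2
          rw [if_pos rfl]
          omega
        · rw [if_neg h2]
          omega
    obtain ⟨h', hfe⟩ := exists_add_of_le hle
    have hev : evalOne f = 4 + evalOne h' := by
      rw [hfe, evalOne_add, evalOne_add, evalOne_single, evalOne_single]
    refine ⟨_, h', irred_binom31 (Ne.symm hqp), irreducible_of_prime ?_, hfe⟩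
    rw [show evalOne h' = evalOne f - 4 by omega]
    exact hN4.1
  · push_neg at hbig
    have hsum : evalOne f = ∑ k ∈ f.coeff.support, f.coeff k := rfl
    have hcard : 6 ≤ f.coeff.support.card := by
      by_contra hc
      push_neg at hc
      have hb : evalOne f ≤ ∑ _k ∈ f.coeff.support, 2 := by
        rw [hsum]
        exact Finset.sum_le_sum (fun i hi => by have := hbig i hi; omega)
      rw [Finset.sum_const, smul_eq_mul] at hb
      omega
    have hne0 : f.coeff.support.Nonempty := Finset.card_pos.mp (by omega)
    have h1lt : 1 < f.coeff.support.card := by omega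
    set p1 := f.coeff.support.max' hne0 with hp1d
    set p4 := f.coeff.support.min' hne0 with hp4d
    have hp14 : p4 < p1 := Finset.min'_lt_max'_of_card _ h1lt
    have hp1S : p1 ∈ f.coeff.support := Finset.max'_mem _ _
    have hp4S : p4 ∈ f.coeff.support := Finset.min'_mem _ _
    set T := (f.coeff.support.erase p1).erase p4 with hTd
    have hp4e : p4 ∈ f.coeff.support.erase p1 :=
      Finset.mem_erase.mpr ⟨by omega, hp4S⟩
    have hTcard : 4 ≤ T.card := by
      rw [hTd, Finset.card_erase_of_mem hp4e, Finset.card_erase_of_mem hp1S]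
      omega
    have hTne : T.Nonempty := Finset.card_pos.mp (by omega)
    set p2 := T.max' hTne with hp2d
    have hp2T : p2 ∈ T := Finset.max'_mem _ _
    have hUcard : 2 ≤ ((T.erase p2).erase (p1 + p4 - p2)).card := by
      have h1 : (T.erase p2).card = T.card - 1 := Finset.card_erase_of_mem hp2T
      have h2 := Finset.pred_card_le_card_erase
        (s := T.erase p2) (a := p1 + p4 - p2)
      omega
    have hUne : ((T.erase p2).erase (p1 + p4 - p2)).Nonempty :=
      Finset.card_pos.mp (by omega)
    obtain ⟨p3, hp3U⟩ := hUne
    have hp3ne : p3 ≠ p1 + p4 - p2 := Finset.ne_of_mem_erase hp3U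
    have hp3e : p3 ∈ T.erase p2 := Finset.mem_of_mem_erase hp3U
    have hp32 : p3 ≠ p2 := Finset.ne_of_mem_erase hp3e
    have hp3T : p3 ∈ T := Finset.mem_of_mem_erase hp3e
    -- memberships in support
    have hTsub : ∀ x ∈ T, x ∈ f.coeff.support ∧ x ≠ p1 ∧ x ≠ p4 := by
      intro x hx
      have h1 := Finset.mem_of_mem_erase hx
      exact ⟨Finset.mem_of_mem_erase h1, Finset.ne_of_mem_erase h1,
        Finset.ne_of_mem_erase hx⟩
    obtain ⟨hp2S, hp21, hp24⟩ := hTsub p2 hp2T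
    obtain ⟨hp3S, hp31, hp34⟩ := hTsub p3 hp3T
    -- chain
    have h12 : p2 < p1 := lt_of_le_of_ne (Finset.le_max' _ _ hp2S) hp21
    have h23 : p3 < p2 := lt_of_le_of_ne (Finset.le_max' _ _ hp3T) hp32
    have h34 : p4 < p3 := lt_of_le_of_ne (Finset.min'_le _ _ hp3S) (Ne.symm hp34)
    have hne' : p1 + p4 ≠ p2 + p3 := by omega
    have hc1 : f.coeff p1 ≠ 0 := Finsupp.mem_support_iff.mp hp1S
    have hc2 : f.coeff p2 ≠ 0 := Finsupp.mem_support_iff.mp hp2S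
    have hc3 : f.coeff p3 ≠ 0 := Finsupp.mem_support_iff.mp hp3S
    have hc4 : f.coeff p4 ≠ 0 := Finsupp.mem_support_iff.mp hp4S
    have hle : ∀ s, (single p1 1 + single p2 1 + single p3 1 + single p4 1 : NL).coeff s ≤ f.coeff s := by
      intro s
      rw [quad_apply]
      by_cases h1 : p1 = s
      · subst h1
        rw [if_pos rfl, if_neg (by omega : ¬ p2 = p1), if_neg (by omega : ¬ p3 = p1),
          if_neg (by omega : ¬ p4 = p1)]
        omega
      · rw [if_neg h1]
        by_cases h2 : p2 = s
        · subst h2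
          rw [if_pos rfl, if_neg (by omega : ¬ p3 = p2), if_neg (by omega : ¬ p4 = p2)]
          omega
        · rw [if_neg h2]
          by_cases h3 : p3 = s
          · subst h3
            rw [if_pos rfl, if_neg (by omega : ¬ p4 = p3)]
            omega
          · rw [if_neg h3]
            by_cases h4 : p4 = s
            · subst h4
              rw [if_pos rfl]
              omega
            · rw [if_neg h4]
              omega
    obtain ⟨h', hfe⟩ := exists_add_of_le hle
    have hev : evalOne f = 4 + evalOne h' := by
      rw [hfe, evalOne_add, evalOne_add, evalOne_add, evalOne_add, evalOne_single,
        evalOne_single, evalOne_single, evalOne_single]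
    refine ⟨_, h', irred_quad h12 h23 h34 hne', irreducible_of_prime ?_, hfe⟩
    rw [show evalOne h' = evalOne f - 4 by omega]
    exact hN4.1
end
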